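/- Define recursively on 𝔏-decorated rooted trees the map Ψ into polynomials ℝ[z_{(ℓ,k)}] by Ψ[Ξ_ℓ] = z_{(ℓ,0)} and Ψ[Ξ_ℓ Π_{j=1}^k I(τ_j)] = k! z_{(ℓ,k)} Π_{j=1}^k Ψ[τ_j]. Then Ψ is a pre-Lie morphism from the grafting pre-Lie algebra of decorated rooted trees to (T, D·): Ψ[τ ↷ τ'] = Ψ[τ]·D Ψ[τ'], where ↷ is grafting and D = Σ (k+1) z_{(ℓ,k+1)} ∂_{z_{(ℓ,k)}}. -/

import Mathlib

open MvPolynomial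

/-- `𝔏`-decorated rooted trees `τ = Ξ_ℓ Π_j I(τ_j)`. -/
inductive LTree (𝔏 : Type) : Type where
  | node : 𝔏 → List (LTree 𝔏) → LTree 𝔏

/-- `Ψ[Ξ_ℓ] = z_{(ℓ,0)}` and `Ψ[Ξ_ℓ Π_{j=1}^k I(τ_j)] = k! z_{(ℓ,k)} Π_j Ψ[τ_j]`. -/
noncomputable def Psi {𝔏 : Type} : LTree 𝔏 → MvPolynomial (𝔏 × ℕ) ℝ
  | .node ℓ ts =>
      (Nat.factorial ts.length) •
        (X (ℓ, ts.length) * (ts.attach.map (fun t => Psi t.1)).prod)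
decreasing_by
  have := List.sizeOf_lt_of_mem t.2
  simp only [LTree.node.sizeOf_spec]
  omega

mutual
/-- The grafting `τ' ↷ τ` as the list (with multiplicities) of the trees obtained by
attaching `τ'` by a new edge to each node of `τ`:
`τ'↷Ξ_ℓ = Ξ_ℓ I(τ')` and
`τ'↷(Ξ_ℓ Π I(τ_j)) = Ξ_ℓ I(τ') Π I(τ_j) + Ξ_ℓ Σ_j I(τ'↷τ_j) Π_{i≠j} I(τ_i)`. -/
def graftList {𝔏 : Type} (τ' : LTree 𝔏) : LTree 𝔏 → List (LTree 𝔏)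
  | .node ℓ ts => .node ℓ (τ' :: ts) :: (graftAux τ' ts).map (.node ℓ)

/-- All children-lists obtained by grafting `τ'` onto a node of one of the children. -/
def graftAux {𝔏 : Type} (τ' : LTree 𝔏) : List (LTree 𝔏) → List (List (LTree 𝔏))
  | [] => []
  | t :: ts => ((graftList τ' t).map (· :: ts)) ++ ((graftAux τ' ts).map (t :: ·))
end

theorem Psi_node {𝔏 : Type} (ℓ : 𝔏) (ts : List (LTree 𝔏)) :
    Psi (.node ℓ ts) =
      (Nat.factorial ts.length : ℝ) • (X (ℓ, ts.length) * (ts.map Psi).prod) := by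
  rw [Psi, Nat.cast_smul_eq_nsmul]
  have h : (ts.attach.map (fun t => Psi t.1)).prod = (ts.map Psi).prod := by simp
  rw [h]

theorem graftAux_length {𝔏 : Type} (τ : LTree 𝔏) :
    ∀ ts : List (LTree 𝔏), ∀ ls ∈ graftAux τ ts, ls.length = ts.length := by
  intro ts
  induction ts with
  | nil => intro ls h; simp [graftAux] at h
  | cons t ts ih =>
    intro ls h
    rw [graftAux, List.mem_append] at h
    rcases h with h | h
    · obtain ⟨s, _, rfl⟩ := List.mem_map.1 h
      simp
    · obtain ⟨ls', hls', rfl⟩ := List.mem_map.1 h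
      simp [ih ls' hls']

theorem D_one {𝔏 : Type}
    (D : MvPolynomial (𝔏 × ℕ) ℝ →ₗ[ℝ] MvPolynomial (𝔏 × ℕ) ℝ)
    (hLeib : ∀ p q : MvPolynomial (𝔏 × ℕ) ℝ, D (p * q) = D p * q + p * D q) :
    D 1 = 0 := by
  have := hLeib 1 1
  simp at this
  linear_combination this

theorem D_C {𝔏 : Type}
    (D : MvPolynomial (𝔏 × ℕ) ℝ →ₗ[ℝ] MvPolynomial (𝔏 × ℕ) ℝ)
    (hLeib : ∀ p q : MvPolynomial (𝔏 × ℕ) ℝ, D (p * q) = D p * q + p * D q)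
    (c : ℝ) : D (C c) = 0 := by
  have h : (C c : MvPolynomial (𝔏 × ℕ) ℝ) = c • 1 := by rw [smul_eq_C_mul, mul_one]
  rw [h, map_smul, D_one D hLeib, smul_zero]

theorem graftAux_sum {𝔏 : Type}
    (D : MvPolynomial (𝔏 × ℕ) ℝ →ₗ[ℝ] MvPolynomial (𝔏 × ℕ) ℝ)
    (hLeib : ∀ p q : MvPolynomial (𝔏 × ℕ) ℝ, D (p * q) = D p * q + p * D q)
    (τ : LTree 𝔏) :
    ∀ ts : List (LTree 𝔏),
      (∀ t ∈ ts, ((graftList τ t).map Psi).sum = Psi τ * D (Psi t)) →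
      ((graftAux τ ts).map (fun ls => (ls.map Psi).prod)).sum
        = Psi τ * D ((ts.map Psi).prod) := by
  intro ts
  induction ts with
  | nil =>
    intro _
    simp [graftAux, D_one D hLeib]
  | cons t ts ih =>
    intro h
    have ht := h t List.mem_cons_self
    have hts := ih (fun s hs => h s (List.mem_cons_of_mem t hs))
    rw [graftAux, List.map_append, List.sum_append, List.map_map, List.map_map]
    have e1 : ((graftList τ t).map ((fun ls => (ls.map Psi).prod) ∘ (· :: ts))).sum
        = ((graftList τ t).map Psi).sum * (ts.map Psi).prod := by
      rw [← List.sum_map_mul_right]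
      congr 1
    have e2 : ((graftAux τ ts).map ((fun ls => (ls.map Psi).prod) ∘ (t :: ·))).sum
        = Psi t * ((graftAux τ ts).map (fun ls => (ls.map Psi).prod)).sum := by
      rw [← List.sum_map_mul_left]
      congr 1
    rw [e1, e2, ht, hts, List.map_cons, List.prod_cons, hLeib]
    ring

/-- `Ψ` is a pre-Lie morphism from the grafting pre-Lie algebra of `𝔏`-decorated rooted
trees to `(T, D·)` : `Ψ[τ ↷ τ'] = Ψ[τ]·D Ψ[τ']`, where
`D = Σ (k+1) z_{(ℓ,k+1)} ∂_{z_{(ℓ,k)}}`. -/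
theorem Psi_preLie_morphism {𝔏 : Type}
    (D : MvPolynomial (𝔏 × ℕ) ℝ →ₗ[ℝ] MvPolynomial (𝔏 × ℕ) ℝ)
    (hLeib : ∀ p q : MvPolynomial (𝔏 × ℕ) ℝ, D (p * q) = D p * q + p * D q)
    (hgen : ∀ x : 𝔏 × ℕ, D (X x) = ((x.2 : ℝ) + 1) • X (x.1, x.2 + 1)) :
    ∀ τ τ' : LTree 𝔏,
      ((graftList τ τ').map Psi).sum = Psi τ * D (Psi τ') := by
  intro τ
  suffices h : ∀ n (τ' : LTree 𝔏), sizeOf τ' ≤ n →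
      ((graftList τ τ').map Psi).sum = Psi τ * D (Psi τ') by
    intro τ'; exact h (sizeOf τ') τ' le_rfl
  intro n
  induction n with
  | zero =>
    intro τ' hτ'
    cases τ' with
    | node ℓ ts => simp at hτ'
  | succ n ih =>
    intro τ' hτ'
    cases τ' with
    | node ℓ ts =>
      have hmem : ∀ t ∈ ts, ((graftList τ t).map Psi).sum = Psi τ * D (Psi t) := by
        intro t ht
        apply ih
        have := List.sizeOf_lt_of_mem ht
        simp only [LTree.node.sizeOf_spec] at hτ'
        omega
      have haux := graftAux_sum D hLeib τ ts hmem
      rw [graftList, List.map_cons, List.sum_cons, List.map_map]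
      have e2 : ((graftAux τ ts).map (Psi ∘ LTree.node ℓ))
          = (graftAux τ ts).map (fun ls =>
              (C (ts.length.factorial : ℝ) * X (ℓ, ts.length)) * (ls.map Psi).prod) := by
        apply List.map_congr_left
        intro ls hls
        simp only [Function.comp_apply]
        rw [Psi_node, graftAux_length τ ts ls hls, smul_eq_C_mul, mul_assoc]
      rw [e2, List.sum_map_mul_left, haux, Psi_node, Psi_node]
      simp only [List.length_cons, List.map_cons, List.prod_cons, map_smul, hLeib, hgen,
        smul_eq_C_mul, D_C D hLeib, mul_zero, zero_mul, add_zero]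
      rw [show ((ts.length + 1).factorial : ℝ)
            = ((ts.length : ℝ) + 1) * ts.length.factorial from by
          push_cast [Nat.factorial_succ]; ring, map_mul]
      ring
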